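/- The q-series identity ∑_{i≥0} (-1)^i y^i q^{C(i+1,2)} ∏_{r=1}^{i+1} 1/(1−q^r y) = 1 holds as an identity of formal power series in y with coefficients in formal power series in q (equivalently, for |q| < 1 and |y| < 1 as analytic functions). -/

import Mathlib

/-- The `q`-series identity
`∑_{i≥0} (-1)^i y^i q^{C(i+1,2)} ∏_{r=1}^{i+1} 1/(1−q^r y) = 1`,
stated analytically for `|q| < 1` and `|y| < 1`. -/
theorem q_series_identity (q y : ℝ) (hq : |q| < 1) (hy : |y| < 1) :
    ∑' i : ℕ, (-1 : ℝ) ^ i * y ^ i * q ^ ((i + 1).choose 2) *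
        ∏ r ∈ Finset.Icc 1 (i + 1), (1 - q ^ r * y)⁻¹ = 1 := by
  have hq0 : 0 ≤ |q| := abs_nonneg q
  have hy0 : 0 ≤ |y| := abs_nonneg y
  have hqy : |q| * |y| < 1 := by nlinarith
  set c : ℝ := 1 - |q| * |y| with hc
  have hc0 : 0 < c := by rw [hc]; linarith
  have hfac : ∀ r : ℕ, 1 ≤ r → c ≤ |1 - q ^ r * y| := by
    intro r hr
    have h1 : |q ^ r * y| ≤ |q| * |y| := by
      rw [abs_mul, abs_pow]
      have h2 : |q| ^ r ≤ |q| ^ 1 := pow_le_pow_of_le_one hq0 hq.le hr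
      have h2' : |q| ^ r ≤ |q| := by simpa using h2
      exact mul_le_mul_of_nonneg_right h2' hy0
    have h3 : 1 - |q ^ r * y| ≤ |1 - q ^ r * y| := by
      have := abs_sub_abs_le_abs_sub (1 : ℝ) (q ^ r * y)
      simpa using this
    rw [hc]; linarith
  have hfacne : ∀ r : ℕ, 1 ≤ r → (1 - q ^ r * y) ≠ 0 := by
    intro r hr h
    have := hfac r hr
    rw [h, abs_zero] at this
    linarith
  set P : ℕ → ℝ := fun n => ∏ r ∈ Finset.Icc 1 n, (1 - q ^ r * y) with hP
  have hPne : ∀ n, P n ≠ 0 := fun n =>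
    Finset.prod_ne_zero_iff.2 fun r hr => hfacne r (Finset.mem_Icc.1 hr).1
  have hPabs : ∀ n, c ^ n ≤ |P n| := by
    intro n
    rw [hP]
    simp only
    rw [Finset.abs_prod]
    calc c ^ n = ∏ _r ∈ Finset.Icc 1 n, c := by
          rw [Finset.prod_const, Nat.card_Icc]; simp
    _ ≤ ∏ r ∈ Finset.Icc 1 n, |1 - q ^ r * y| :=
        Finset.prod_le_prod (fun _ _ => hc0.le) (fun r hr => hfac r (Finset.mem_Icc.1 hr).1)
  set T : ℕ → ℝ := fun n => (-1) ^ n * y ^ n * q ^ ((n + 1).choose 2) * (P n)⁻¹ with hT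
  set a : ℕ → ℝ := fun i => (-1 : ℝ) ^ i * y ^ i * q ^ ((i + 1).choose 2) *
        ∏ r ∈ Finset.Icc 1 (i + 1), (1 - q ^ r * y)⁻¹ with haa
  have ha' : ∀ i, a i = (-1) ^ i * y ^ i * q ^ ((i + 1).choose 2) * (P (i + 1))⁻¹ := by
    intro i
    rw [haa, hP]
    simp [Finset.prod_inv_distrib]
  have he : ∀ n : ℕ, (n + 2).choose 2 = (n + 1).choose 2 + (n + 1) := by
    intro n
    rw [show n + 2 = (n + 1) + 1 from rfl, Nat.choose_succ_succ, Nat.choose_one_right]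
    ring
  have hPsucc : ∀ n, P (n + 1) = P n * (1 - q ^ (n + 1) * y) := by
    intro n
    rw [hP]
    exact Finset.prod_Icc_succ_top (Nat.le_add_left 1 n) _
  have htel : ∀ i, T i - T (i + 1) = a i := by
    intro i
    rw [ha' i, hT]
    simp only
    rw [hPsucc i, he i, pow_add]
    have h1 := hPne i
    have h2 := hfacne (i + 1) (Nat.le_add_left 1 i)
    field_simp
    ring
  have hsum : ∀ n, ∑ i ∈ Finset.range n, a i = 1 - T n := by
    intro n
    induction n with
    | zero => simp [hT, hP]
    | succ n ih =>
      rw [Finset.sum_range_succ, ih]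
      have := htel n
      linarith
  set u : ℕ → ℝ := fun n => (|y| / c) ^ n * |q| ^ ((n + 1).choose 2) with hu
  have hu0 : ∀ n, 0 ≤ u n := fun n =>
    mul_nonneg (pow_nonneg (div_nonneg hy0 hc0.le) n) (pow_nonneg hq0 _)
  have hTu : ∀ n, |T n| ≤ u n := by
    intro n
    have hTabs : |T n| = |y| ^ n * |q| ^ ((n + 1).choose 2) * |P n|⁻¹ := by
      rw [hT]
      simp [abs_mul, abs_pow, abs_inv, abs_neg]
    have huval : u n = |y| ^ n * |q| ^ ((n + 1).choose 2) * (c ^ n)⁻¹ := by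
      rw [hu]
      simp only
      rw [div_pow]
      ring
    rw [hTabs, huval]
    have hinv : |P n|⁻¹ ≤ (c ^ n)⁻¹ := inv_anti₀ (pow_pos hc0 n) (hPabs n)
    exact mul_le_mul_of_nonneg_left hinv
      (mul_nonneg (pow_nonneg hy0 n) (pow_nonneg hq0 _))
  have husum : Summable u := by
    apply summable_of_ratio_norm_eventually_le (r := 1 / 2) (by norm_num)
    have hlim : Filter.Tendsto (fun n : ℕ => (|y| / c) * |q| ^ (n + 1))
        Filter.atTop (nhds 0) := by
      have h1 := tendsto_pow_atTop_nhds_zero_of_lt_one hq0 hq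
      have h2 := h1.comp (Filter.tendsto_add_atTop_nat 1)
      simpa using h2.const_mul (|y| / c)
    have hev : ∀ᶠ n in Filter.atTop, (|y| / c) * |q| ^ (n + 1) < 1 / 2 := by
      have : (0 : ℝ) < 1 / 2 := by norm_num
      exact hlim.eventually (gt_mem_nhds this)
    filter_upwards [hev] with n hn
    have hrec : u (n + 1) = ((|y| / c) * |q| ^ (n + 1)) * u n := by
      rw [hu]
      simp only
      rw [he n, pow_add, pow_succ]
      ring
    rw [Real.norm_eq_abs, Real.norm_eq_abs, abs_of_nonneg (hu0 _), abs_of_nonneg (hu0 _), hrec]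
    exact mul_le_mul_of_nonneg_right hn.le (hu0 n)
  have hTzero : Filter.Tendsto T Filter.atTop (nhds 0) := by
    apply squeeze_zero_norm (fun n => ?_) husum.tendsto_atTop_zero
    rw [Real.norm_eq_abs]; exact hTu n
  have hasum : Summable a := by
    have h1 : Summable (fun i => u i + u (i + 1)) :=
      husum.add ((summable_nat_add_iff 1).2 husum)
    apply Summable.of_norm_bounded h1
    intro i
    rw [← htel i, Real.norm_eq_abs]
    calc |T i - T (i + 1)| ≤ |T i| + |T (i + 1)| := abs_sub _ _
    _ ≤ u i + u (i + 1) := add_le_add (hTu i) (hTu _)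
  have h2 : Filter.Tendsto (fun n => ∑ i ∈ Finset.range n, a i)
      Filter.atTop (nhds (∑' i, a i)) := hasum.hasSum.tendsto_sum_nat
  have h3 : Filter.Tendsto (fun n => ∑ i ∈ Finset.range n, a i)
      Filter.atTop (nhds 1) := by
    simp only [hsum]
    simpa using tendsto_const_nhds.sub hTzero
  exact tendsto_nhds_unique h2 h3
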